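/- If B1 ≻^{B0} B2, then for every vector p ∈ ℝ^d the Euclidean norms satisfy ‖X(B2,B0)·p‖₂ ≤ ‖X(B1,B0)·p‖₂. Equivalently, the 2-coherence satisfies c^{(2)}_{B1}(ρ0) ≤ c^{(2)}_{B2}(ρ0) for all states ρ0 diagonal in B0. -/

import Mathlib

open Matrix

noncomputable def transMatrix {d : ℕ}
    (B C : OrthonormalBasis (Fin d) ℂ (EuclideanSpace ℂ (Fin d))) :
    Matrix (Fin d) (Fin d) ℝ :=
  Matrix.of fun i j => ‖(inner ℂ (B i) (C j) : ℂ)‖ ^ 2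

def IsDoublyStochastic {d : ℕ} (M : Matrix (Fin d) (Fin d) ℝ) : Prop :=
  (∀ i j, 0 ≤ M i j) ∧ (∀ i, ∑ j, M i j = 1) ∧ (∀ j, ∑ i, M i j = 1)

/-- `B1 ≻^{B0} B2` : there is a doubly stochastic `M` with `X(B2,B0) = M · X(B1,B0)`. -/
def BasisMaj {d : ℕ}
    (B0 B1 B2 : OrthonormalBasis (Fin d) ℂ (EuclideanSpace ℂ (Fin d))) : Prop :=
  ∃ M : Matrix (Fin d) (Fin d) ℝ, IsDoublyStochastic M ∧
    transMatrix B2 B0 = M * transMatrix B1 B0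

/-- A doubly stochastic matrix contracts the Euclidean norm (squared form). -/
lemma ds_mulVec_sq_le {d : ℕ} {M : Matrix (Fin d) (Fin d) ℝ}
    (hM : IsDoublyStochastic M) (v : Fin d → ℝ) :
    ∑ i, (M.mulVec v i) ^ 2 ≤ ∑ j, v j ^ 2 := by
  obtain ⟨hpos, hrow, hcol⟩ := hM
  calc ∑ i, (M.mulVec v i) ^ 2
      ≤ ∑ i, ∑ j, M i j * v j ^ 2 := by
        refine Finset.sum_le_sum fun i _ => ?_
        have := Finset.sum_sq_le_sum_mul_sum_of_sq_eq_mul Finset.univ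
          (r := fun j => M i j * v j) (f := fun j => M i j)
          (g := fun j => M i j * v j ^ 2)
          (fun j _ => hpos i j) (fun j _ => mul_nonneg (hpos i j) (sq_nonneg _))
          (fun j _ => by ring)
        simpa [Matrix.mulVec, dotProduct, hrow i] using this
    _ = ∑ j, v j ^ 2 := by
        rw [Finset.sum_comm]
        simp [← Finset.sum_mul, hcol]

/-- If `B1 ≻^{B0} B2`, then for every vector `p` the Euclidean norms satisfy
`‖X(B2,B0)·p‖₂ ≤ ‖X(B1,B0)·p‖₂`. -/
theorem basisMaj_euclidean_norm_le {d : ℕ}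
    (B0 B1 B2 : OrthonormalBasis (Fin d) ℂ (EuclideanSpace ℂ (Fin d)))
    (h : BasisMaj B0 B1 B2) (p : Fin d → ℝ) :
    Real.sqrt (∑ i, ((transMatrix B2 B0).mulVec p i) ^ 2) ≤
      Real.sqrt (∑ i, ((transMatrix B1 B0).mulVec p i) ^ 2) := by
  obtain ⟨M, hM, hEq⟩ := h
  apply Real.sqrt_le_sqrt
  calc ∑ i, ((transMatrix B2 B0).mulVec p i) ^ 2
      = ∑ i, (M.mulVec ((transMatrix B1 B0).mulVec p) i) ^ 2 := by
        rw [hEq, ← Matrix.mulVec_mulVec]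
    _ ≤ ∑ i, ((transMatrix B1 B0).mulVec p i) ^ 2 := ds_mulVec_sq_le hM _
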